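/- Let V : [0,φ_b] → R be Lipschitz, with V(φ) > 0 for φ ∈ (0,φ_b], V(0) = 0, and suppose √V is Lipschitz on [0,φ_b]. Then the initial value problem φ'(x) = −√(2V(φ(x))), φ(0) = φ_b has a unique solution φ ∈ C¹([0,∞)) which is strictly decreasing, satisfies 0 < φ(x) ≤ φ_b for all x ≥ 0, and φ(x) → 0 as x → ∞. -/

import Mathlib

open Set Filter

theorem ode_unique_solution (φ_b : ℝ) (hφb : 0 < φ_b) (V : ℝ → ℝ)
    (K K' : NNReal)
    (hVlip : LipschitzOnWith K V (Icc 0 φ_b))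
    (hVpos : ∀ φ ∈ Ioc (0:ℝ) φ_b, 0 < V φ)
    (hV0 : V 0 = 0)
    (hsqrtlip : LipschitzOnWith K' (fun φ => Real.sqrt (V φ)) (Icc 0 φ_b)) :
    (∃ φ : ℝ → ℝ,
      (∀ x ∈ Ici (0:ℝ), HasDerivWithinAt φ (-Real.sqrt (2 * V (φ x))) (Ici 0) x) ∧
      φ 0 = φ_b ∧
      StrictAntiOn φ (Ici 0) ∧
      (∀ x ∈ Ici (0:ℝ), 0 < φ x ∧ φ x ≤ φ_b) ∧
      Tendsto φ atTop (nhds 0)) ∧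
    (∀ φ ψ : ℝ → ℝ,
      ((∀ x ∈ Ici (0:ℝ), HasDerivWithinAt φ (-Real.sqrt (2 * V (φ x))) (Ici 0) x) ∧
        φ 0 = φ_b ∧ StrictAntiOn φ (Ici 0) ∧
        (∀ x ∈ Ici (0:ℝ), 0 < φ x ∧ φ x ≤ φ_b) ∧ Tendsto φ atTop (nhds 0)) →
      ((∀ x ∈ Ici (0:ℝ), HasDerivWithinAt ψ (-Real.sqrt (2 * V (ψ x))) (Ici 0) x) ∧
        ψ 0 = φ_b ∧ StrictAntiOn ψ (Ici 0) ∧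
        (∀ x ∈ Ici (0:ℝ), 0 < ψ x ∧ ψ x ≤ φ_b) ∧ Tendsto ψ atTop (nhds 0)) →
      EqOn φ ψ (Ici 0)) := by
  classical
  -- the clamped vector field
  set c : ℝ → ℝ := fun y => max 0 (min y φ_b) with hcdef
  set g : ℝ → ℝ := fun y => -Real.sqrt (2 * V (c y)) with hgdef
  have hcmem : ∀ y, c y ∈ Icc (0:ℝ) φ_b :=
    fun y => ⟨le_max_left _ _, max_le hφb.le (min_le_right _ _)⟩
  have hcid : ∀ y, 0 < y → y ≤ φ_b → c y = y := by
    intro y h1 h2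
    simp only [hcdef, min_eq_left h2, max_eq_right h1.le]
  have hcg : ∀ y, 0 < y → y ≤ φ_b → g y = -Real.sqrt (2 * V y) := by
    intro y h1 h2
    simp only [hgdef, hcid y h1 h2]
  have hclamp : ∀ y z, |c y - c z| ≤ |y - z| := by
    intro y z
    have h1 : |c y - c z| ≤ |min y φ_b - min z φ_b| := by
      simp only [hcdef]
      rw [max_comm 0 (min y φ_b), max_comm 0 (min z φ_b)]
      exact abs_max_sub_max_le_abs _ _ _
    have h2 : |min y φ_b - min z φ_b| ≤ max |y - z| |φ_b - φ_b| :=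
      abs_min_sub_min_le_max _ _ _ _
    simpa using h1.trans h2
  -- Lipschitz bound for g
  set Lg : NNReal := ⟨Real.sqrt 2, Real.sqrt_nonneg 2⟩ * K' with hLgdef
  have hsplit : ∀ y, Real.sqrt (2 * V (c y)) = Real.sqrt 2 * Real.sqrt (V (c y)) :=
    fun y => Real.sqrt_mul (by norm_num) _
  have hg_lip : LipschitzWith Lg g := by
    apply LipschitzWith.of_dist_le_mul
    intro y z
    rw [Real.dist_eq, Real.dist_eq]
    have : g y - g z = -(Real.sqrt 2 * Real.sqrt (V (c y)) - Real.sqrt 2 * Real.sqrt (V (c z))) := by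
      simp only [hgdef, hsplit]; ring
    rw [this, abs_neg, ← mul_sub, abs_mul, abs_of_nonneg (Real.sqrt_nonneg 2)]
    have hlip := hsqrtlip.dist_le_mul (c y) (hcmem y) (c z) (hcmem z)
    rw [Real.dist_eq, Real.dist_eq] at hlip
    have hK' : (K' : ℝ) * |c y - c z| ≤ (K' : ℝ) * |y - z| :=
      mul_le_mul_of_nonneg_left (hclamp y z) K'.coe_nonneg
    have hLgeq : (Lg : ℝ) = Real.sqrt 2 * (K' : ℝ) := by
      rw [hLgdef]; exact NNReal.coe_mul (⟨Real.sqrt 2, Real.sqrt_nonneg 2⟩ : NNReal) K'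
    rw [hLgeq, mul_assoc]
    exact (mul_le_mul_of_nonneg_left (hlip.trans hK') (Real.sqrt_nonneg 2))
  -- uniform bound for g
  set M : ℝ := Real.sqrt (2 * ((K : ℝ) * φ_b)) with hMdef
  have hM0 : 0 ≤ M := Real.sqrt_nonneg _
  have hVb : ∀ t ∈ Icc (0:ℝ) φ_b, V t ≤ (K : ℝ) * φ_b := by
    intro t ht
    have := hVlip.dist_le_mul t ht 0 ⟨le_rfl, hφb.le⟩
    rw [Real.dist_eq, Real.dist_eq, hV0, sub_zero, sub_zero, abs_of_nonneg ht.1] at this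
    have ht2 : (K : ℝ) * t ≤ (K : ℝ) * φ_b := mul_le_mul_of_nonneg_left ht.2 K.coe_nonneg
    calc V t ≤ |V t| := le_abs_self _
      _ ≤ (K : ℝ) * t := this
      _ ≤ (K : ℝ) * φ_b := ht2
  have hgbound : ∀ y, ‖g y‖ ≤ M := by
    intro y
    rw [Real.norm_eq_abs]
    simp only [hgdef, abs_neg, abs_of_nonneg (Real.sqrt_nonneg _)]
    exact Real.sqrt_le_sqrt (by have := hVb (c y) (hcmem y); linarith)
  -- Picard-Lindelöf on each interval [-n, n]
  have hpl : ∀ n : ℕ, IsPicardLindelof (fun _ y => g y) (tmin := -(n:ℝ)) (tmax := (n:ℝ))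
      ⟨0, ⟨neg_nonpos.2 n.cast_nonneg, n.cast_nonneg⟩⟩ φ_b ⟨M * n + 1, by positivity⟩ 0 ⟨M, hM0⟩ Lg := by
    intro n
    refine ⟨fun t _ => hg_lip.lipschitzOnWith, fun x _ => continuousOn_const,
      fun t _ x _ => hgbound x, ?_⟩
    have : max ((n:ℝ) - 0) (0 - -(n:ℝ)) = (n:ℝ) := by
      rw [sub_zero, zero_sub, neg_neg, max_self]
    show M * max ((n:ℝ) - 0) (0 - -(n:ℝ)) ≤ (M * n + 1) - 0
    rw [this]; linarith
  have hex : ∀ n : ℕ, ∃ F : ℝ → ℝ, F 0 = φ_b ∧ ∀ t ∈ Icc (-(n:ℝ)) n,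
      HasDerivWithinAt F (g (F t)) (Icc (-(n:ℝ)) n) t :=
    fun n => (hpl n).exists_eq_forall_mem_Icc_hasDerivWithinAt₀
  choose F hF0 hFd using hex
  -- the solutions agree on overlaps
  have agree : ∀ m n : ℕ, ∀ y : ℝ, |y| < m → |y| < n → F m y = F n y := by
    intro m n y hym hyn
    set k : ℝ := min (m:ℝ) (n:ℝ) with hkdef
    have hk : 0 < k := lt_min ((abs_nonneg y).trans_lt hym) ((abs_nonneg y).trans_lt hyn)
    have hkm : k ≤ (m:ℝ) := min_le_left _ _
    have hkn : k ≤ (n:ℝ) := min_le_right _ _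
    have hderiv : ∀ p : ℕ, (k ≤ (p:ℝ)) → ∀ t ∈ Ioo (-k) k,
        HasDerivAt (F p) (g (F p t)) t ∧ F p t ∈ (univ : Set ℝ) := by
      intro p hkp t ht
      refine ⟨(hFd p t ⟨by linarith [ht.1], by linarith [ht.2]⟩).hasDerivAt
        (Icc_mem_nhds (by linarith [ht.1]) (by linarith [ht.2])), trivial⟩
    have key := ODE_solution_unique_of_mem_Ioo (v := fun _ y => g y) (s := fun _ => univ)
      (fun t _ => hg_lip.lipschitzOnWith) (show (0:ℝ) ∈ Ioo (-k) k from ⟨neg_lt_zero.2 hk, hk⟩)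
      (hderiv m hkm) (hderiv n hkn) (by rw [hF0 m, hF0 n])
    exact key (abs_lt.1 (lt_min hym hyn))
  set α : ℝ → ℝ := fun y => F (⌊|y|⌋₊ + 1) y with hαdef
  have hαF : ∀ (n : ℕ) (y : ℝ), |y| < n → α y = F n y := by
    intro n y hy
    have h1 : |y| < (((⌊|y|⌋₊ + 1 : ℕ)):ℝ) := by
      push_cast; exact Nat.lt_floor_add_one |y|
    exact agree _ n y h1 hy
  have hα0 : α 0 = φ_b := by
    rw [hαF 1 0 (by norm_num)]; exact hF0 1
  have hα : ∀ x, HasDerivAt α (g (α x)) x := by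
    intro x
    set n : ℕ := ⌊|x|⌋₊ + 1 with hndef
    have hx : |x| < (n:ℝ) := by push_cast [hndef]; exact Nat.lt_floor_add_one |x|
    have hev : α =ᶠ[nhds x] F n := by
      filter_upwards [Ioo_mem_nhds (abs_lt.1 hx).1 (abs_lt.1 hx).2] with y hy
      exact hαF n y (abs_lt.2 ⟨hy.1, hy.2⟩)
    have hFn : HasDerivAt (F n) (g (F n x)) x :=
      (hFd n x ⟨(abs_lt.1 hx).1.le, (abs_lt.1 hx).2.le⟩).hasDerivAt
        (Icc_mem_nhds (abs_lt.1 hx).1 (abs_lt.1 hx).2)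
    have := hFn.congr_of_eventuallyEq hev
    rwa [← hαF n x hx] at this
  have hαdiff : Differentiable ℝ α := fun x => (hα x).differentiableAt
  have hαcont : Continuous α := hαdiff.continuous
  have hgneg : ∀ y, g y ≤ 0 := fun y => neg_nonpos.2 (Real.sqrt_nonneg _)
  have hanti : Antitone α :=
    antitone_of_deriv_nonpos hαdiff (fun x => by rw [(hα x).deriv]; exact hgneg _)
  have hg0 : g 0 = 0 := by
    have hc0 : c 0 = 0 := by simp [hcdef, min_eq_left hφb.le]
    simp [hgdef, hc0, hV0]
  -- α never vanishes
  have hne : ∀ z, α z ≠ 0 := by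
    intro z hz
    have hzmem : z ∈ Ioo (min z 0 - 1) (max z 0 + 1) :=
      ⟨by have := min_le_left z 0; linarith, by have := le_max_left z 0; linarith⟩
    have hzero : ∀ t ∈ Ioo (min z 0 - 1) (max z 0 + 1),
        HasDerivAt (fun _ : ℝ => (0:ℝ)) (g ((fun _ : ℝ => (0:ℝ)) t)) t ∧
          (fun _ : ℝ => (0:ℝ)) t ∈ (univ : Set ℝ) := by
      intro t _
      refine ⟨?_, trivial⟩
      simp only [hg0]
      exact hasDerivAt_const t 0
    have key := ODE_solution_unique_of_mem_Ioo (v := fun _ y => g y) (s := fun _ => univ)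
      (fun t _ => hg_lip.lipschitzOnWith) hzmem
      (fun t _ => ⟨hα t, trivial⟩) hzero hz
    have h0mem : (0:ℝ) ∈ Ioo (min z 0 - 1) (max z 0 + 1) :=
      ⟨by have := min_le_right z 0; linarith, by have := le_max_right z 0; linarith⟩
    have := key h0mem
    rw [hα0] at this
    exact hφb.ne' this
  -- α is positive
  have hpos : ∀ x, 0 < α x := by
    intro x
    rcases le_or_gt x 0 with hx | hx
    · have := hanti hx
      rw [hα0] at this; linarith
    · by_contra h
      push_neg at h
      have h0 : (0:ℝ) ∈ Icc (α x) (α 0) := ⟨h, by rw [hα0]; exact hφb.le⟩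
      obtain ⟨z, _, hz0⟩ := intermediate_value_Icc' hx.le hαcont.continuousOn h0
      exact hne z hz0
  have hle : ∀ x, 0 ≤ x → α x ≤ φ_b := fun x hx => (hanti hx).trans_eq hα0
  have hαderiv : ∀ x ∈ Ici (0:ℝ), HasDerivWithinAt α (-Real.sqrt (2 * V (α x))) (Ici 0) x := by
    intro x hx
    rw [← hcg (α x) (hpos x) (hle x hx)]
    exact (hα x).hasDerivWithinAt
  have hsanti : StrictAntiOn α (Ici 0) := by
    apply strictAntiOn_of_deriv_neg (convex_Ici 0) hαcont.continuousOn
    intro x hx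
    rw [interior_Ici] at hx
    rw [(hα x).deriv, hcg (α x) (hpos x) (hle x (le_of_lt hx))]
    have hV : 0 < V (α x) := hVpos (α x) ⟨hpos x, hle x (le_of_lt hx)⟩
    exact neg_lt_zero.2 (Real.sqrt_pos.2 (by linarith))
  -- tendsto 0
  have hbdd : BddBelow (range α) := ⟨0, by rintro _ ⟨x, rfl⟩; exact (hpos x).le⟩
  have htend : Tendsto α atTop (nhds (⨅ x, α x)) := tendsto_atTop_ciInf hanti hbdd
  set L : ℝ := ⨅ x, α x with hLdef
  have hL0 : 0 ≤ L := le_ciInf fun x => (hpos x).le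
  have hLle : ∀ x, L ≤ α x := fun x => ciInf_le hbdd x
  have hLeq : L = 0 := by
    by_contra hne0
    have hL : 0 < L := hL0.lt_of_ne (Ne.symm hne0)
    have hLφ : L ≤ φ_b := (hLle 0).trans_eq hα0
    obtain ⟨t0, ht0, hmin⟩ := isCompact_Icc.exists_isMinOn (nonempty_Icc.2 hLφ)
      (hVlip.continuousOn.mono (Icc_subset_Icc hL.le le_rfl))
    have hVt0 : 0 < V t0 := hVpos t0 ⟨hL.trans_le ht0.1, ht0.2⟩
    set ε : ℝ := Real.sqrt (2 * V t0) with hεdef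
    have hε : 0 < ε := Real.sqrt_pos.2 (by linarith)
    set β : ℝ → ℝ := fun x => α x + ε * x with hβdef
    have hβd : ∀ x, HasDerivAt β (g (α x) + ε) x := by
      intro x
      exact (hα x).add (by simpa using (hasDerivAt_id x).const_mul ε)
    have hβcont : ContinuousOn β (Ici 0) :=
      (hαcont.add (continuous_const.mul continuous_id)).continuousOn
    have hβdiff : DifferentiableOn ℝ β (interior (Ici 0)) :=
      fun x _ => (hβd x).differentiableAt.differentiableWithinAt
    have hβanti : AntitoneOn β (Ici 0) := by
      apply antitoneOn_of_deriv_nonpos (convex_Ici 0) hβcont hβdiff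
      intro x hx
      rw [interior_Ici] at hx
      rw [(hβd x).deriv, hcg (α x) (hpos x) (hle x hx.le)]
      have hm : V t0 ≤ V (α x) := hmin ⟨hLle x, hle x hx.le⟩
      have hsq : ε ≤ Real.sqrt (2 * V (α x)) := Real.sqrt_le_sqrt (by linarith)
      linarith
    set x0 : ℝ := (φ_b + 1) / ε with hx0def
    have hx00 : 0 ≤ x0 := by positivity
    have hβle : β x0 ≤ β 0 := hβanti self_mem_Ici (mem_Ici.2 hx00) hx00
    have hεx : ε * x0 = φ_b + 1 := by
      rw [hx0def, mul_div_cancel₀ _ hε.ne']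
    have hβ0 : β 0 = φ_b := by simp [hβdef, hα0]
    have hβx0 : β x0 = α x0 + (φ_b + 1) := by simp only [hβdef]; rw [hεx]
    have := hpos x0
    rw [hβ0, hβx0] at hβle
    linarith
  rw [hLeq] at htend
  constructor
  · exact ⟨α, hαderiv, hα0, hsanti, fun x hx => ⟨hpos x, hle x hx⟩, htend⟩
  · rintro φ ψ ⟨hφd, hφ0, -, hφmem, -⟩ ⟨hψd, hψ0, -, hψmem, -⟩
    have hφg : ∀ x ∈ Ici (0:ℝ), HasDerivWithinAt φ (g (φ x)) (Ici 0) x := by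
      intro x hx
      rw [hcg (φ x) (hφmem x hx).1 (hφmem x hx).2]
      exact hφd x hx
    have hψg : ∀ x ∈ Ici (0:ℝ), HasDerivWithinAt ψ (g (ψ x)) (Ici 0) x := by
      intro x hx
      rw [hcg (ψ x) (hψmem x hx).1 (hψmem x hx).2]
      exact hψd x hx
    intro x hx
    have key := ODE_solution_unique (v := fun _ y => g y) (K := Lg) (a := 0) (b := x) (fun _ => hg_lip)
      (fun t ht => ((hφg t ht.1).continuousWithinAt).mono Icc_subset_Ici_self)
      (fun t ht => (hφg t ht.1).mono (Ici_subset_Ici.2 ht.1))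
      (fun t ht => ((hψg t ht.1).continuousWithinAt).mono Icc_subset_Ici_self)
      (fun t ht => (hψg t ht.1).mono (Ici_subset_Ici.2 ht.1))
      (hφ0.trans hψ0.symm)
    exact key ⟨hx, le_rfl⟩
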